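/- For every x ∈ (0,1), the function ψ̃(t) := cot(πt/2) − 2/(πt) is differentiable at x and its derivative equals −(2/π)·∑_{k ∈ ℤ, k ≠ 0} 1/(2k + x)², where the sum converges absolutely. -/

import Mathlib

open Real Set MeasureTheory Filter

noncomputable section DerivCotAux

private lemma exp_sub_one_norm_sq (θ : ℝ) :
    ‖Complex.exp ((θ : ℂ) * Complex.I) - 1‖ ^ 2 = 2 - 2 * Real.cos θ := by
  rw [Complex.sq_norm, Complex.normSq_apply]
  simp only [Complex.sub_re, Complex.sub_im, Complex.exp_ofReal_mul_I_re,
    Complex.exp_ofReal_mul_I_im, Complex.one_re, Complex.one_im, sub_zero]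
  nlinarith [Real.sin_sq_add_cos_sq θ]

private lemma summable_aux (a : ℝ) : Summable (fun n : ℤ => 1 / (a - (n : ℝ)) ^ 2) := by
  have h := (Real.summable_one_div_int_add_rpow (-a) 2).mpr one_lt_two
  refine h.congr fun n => ?_
  rw [show ((2:ℝ)) = ((2:ℕ):ℝ) by norm_num, Real.rpow_natCast, sq_abs]
  congr 1
  ring

/-- Parseval computation: `∑_{n∈ℤ} 1/(a-n)^2 = π^2 / sin^2 (π a)` for `a ∈ (0,1)`. -/
private lemma tsum_one_div_sub_int_sq {a : ℝ} (h0 : 0 < a) (h1 : a < 1) :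
    ∑' n : ℤ, 1 / (a - (n : ℝ)) ^ 2 = π ^ 2 / Real.sin (π * a) ^ 2 := by
  haveI : Fact ((0:ℝ) < 1) := ⟨one_pos⟩
  have hπ : (π : ℝ) ≠ 0 := Real.pi_ne_zero
  have hsin : Real.sin (π * a) ≠ 0 := by
    refine ne_of_gt (Real.sin_pos_of_pos_of_lt_pi (by positivity) ?_)
    nlinarith [Real.pi_pos]
  have hne : ∀ n : ℤ, a - (n : ℝ) ≠ 0 := by
    intro n h
    have han : a = (n : ℝ) := by linarith
    rcases lt_or_ge n 1 with hn | hn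
    · have : (n : ℝ) ≤ 0 := by exact_mod_cast Int.lt_add_one_iff.mp (by exact_mod_cast hn)
      linarith
    · have : (1:ℝ) ≤ (n : ℝ) := by exact_mod_cast hn
      linarith
  set g : ℝ → ℂ := fun t => Complex.exp ((2 * π * a * t : ℝ) * Complex.I) with hg_def
  have hgc : Continuous g := by
    apply Complex.continuous_exp.comp
    exact (Complex.continuous_ofReal.comp (by continuity)).mul continuous_const
  set f : AddCircle (1:ℝ) → ℂ := AddCircle.liftIoc 1 0 g with hf_def
  have hnorm : ∀ z, ‖f z‖ = 1 := by
    intro z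
    have : f z = g ((AddCircle.equivIoc 1 0 z : ℝ)) := rfl
    rw [this, hg_def, Complex.norm_exp_ofReal_mul_I]
  have hfm : AEStronglyMeasurable f AddCircle.haarAddCircle := by
    have : Measurable f :=
      (hgc.measurable.comp measurable_subtype_coe).comp
        (AddCircle.measurableEquivIoc 1 0).measurable
    exact this.aestronglyMeasurable
  have hmem : MemLp f 2 AddCircle.haarAddCircle :=
    MemLp.of_bound hfm 1 (Eventually.of_forall fun z => (hnorm z).le)
  set F := hmem.toLp f with hF_def
  have hPar := tsum_sq_fourierCoeff F
  -- right hand side equals 1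
  have hRHS : (∫ t : AddCircle 1, ‖F t‖ ^ 2 ∂AddCircle.haarAddCircle) = 1 := by
    have : (∫ t : AddCircle 1, ‖F t‖ ^ 2 ∂AddCircle.haarAddCircle)
        = ∫ _t : AddCircle 1, (1:ℝ) ∂AddCircle.haarAddCircle := by
      refine integral_congr_ae ?_
      filter_upwards [hmem.coeFn_toLp] with t ht
      rw [ht, hnorm t, one_pow]
    rw [this]
    simp
  -- compute the Fourier coefficients
  have hcoeff : ∀ n : ℤ, fourierCoeff (⇑F) n
      = (Complex.exp ((2 * π * a : ℝ) * Complex.I) - 1)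
        / (((2 * π * (a - n) : ℝ) : ℂ) * Complex.I) := by
    intro n
    have hc0 : ((2 * π * (a - n) : ℝ) : ℂ) * Complex.I ≠ 0 := by
      apply mul_ne_zero _ Complex.I_ne_zero
      rw [Complex.ofReal_ne_zero]
      have := hne n
      positivity
    have h1' : fourierCoeff (⇑F) n = fourierCoeff f n := by
      refine integral_congr_ae ?_
      filter_upwards [hmem.coeFn_toLp] with t ht
      rw [ht]
    rw [h1', hf_def, fourierCoeff_liftIoc_eq, fourierCoeffOn_eq_integral]
    have hInt : (∫ x in (0:ℝ)..(0+1), fourier (-n) ((x : ℝ) : AddCircle ((0:ℝ)+1-0)) • g x)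
        = ∫ x in (0:ℝ)..(0+1), Complex.exp ((((2 * π * (a - n) : ℝ) : ℂ) * Complex.I) * x) := by
      refine intervalIntegral.integral_congr fun x _ => ?_
      rw [fourier_coe_apply, smul_eq_mul, hg_def, ← Complex.exp_add]
      congr 1
      push_cast
      ring
    rw [hInt, integral_exp_mul_complex hc0]
    have hend : Complex.exp ((((2 * π * (a - n) : ℝ) : ℂ) * Complex.I) * ((((0:ℝ)+1 : ℝ)) : ℂ))
        = Complex.exp (((2 * π * a : ℝ) : ℂ) * Complex.I) := by
      have h2 : ((((2 * π * (a - n) : ℝ)) : ℂ) * Complex.I) * ((((0:ℝ)+1 : ℝ)) : ℂ)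
          = ((2 * π * a : ℝ) : ℂ) * Complex.I - (n : ℂ) * (2 * π * Complex.I) := by
        push_cast; ring
      rw [h2, Complex.exp_sub, Complex.exp_int_mul_two_pi_mul_I, div_one]
    rw [hend]
    push_cast
    norm_num
  -- norms of the coefficients
  have hterm : ∀ n : ℤ, ‖fourierCoeff (⇑F) n‖ ^ 2
      = Real.sin (π * a) ^ 2 / π ^ 2 * (1 / (a - (n : ℝ)) ^ 2) := by
    intro n
    rw [hcoeff n, norm_div, div_pow, exp_sub_one_norm_sq]
    have hden : ‖((2 * π * (a - n) : ℝ) : ℂ) * Complex.I‖ ^ 2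
        = 4 * π ^ 2 * (a - (n:ℝ)) ^ 2 := by
      rw [norm_mul, Complex.norm_I, mul_one, Complex.norm_real, Real.norm_eq_abs, sq_abs]
      ring
    rw [hden]
    have hcos : 2 - 2 * Real.cos (2 * π * a) = 4 * Real.sin (π * a) ^ 2 := by
      rw [show (2:ℝ) * π * a = 2 * (π * a) by ring, Real.cos_two_mul]
      nlinarith [Real.sin_sq_add_cos_sq (π * a)]
    rw [hcos]
    have h := hne n
    field_simp
  rw [hRHS] at hPar
  simp_rw [hterm, tsum_mul_left] at hPar
  have hsq : Real.sin (π * a) ^ 2 ≠ 0 := pow_ne_zero 2 hsin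
  field_simp at hPar ⊢
  linear_combination hPar

end DerivCotAux

open Real Set

theorem deriv_cot_tilde (x : ℝ) (hx : x ∈ Ioo (0:ℝ) 1) :
    Summable (fun k : {k : ℤ // k ≠ 0} => 1 / (2 * (k : ℝ) + x) ^ 2) ∧
    HasDerivAt (fun t : ℝ => Real.cot (π * t / 2) - 2 / (π * t))
      (-(2 / π) * ∑' k : {k : ℤ // k ≠ 0}, 1 / (2 * (k : ℝ) + x) ^ 2) x := by
  obtain ⟨hx0, hx1⟩ := hx
  have hπ : (0:ℝ) < π := Real.pi_pos
  have hx0' : x ≠ 0 := ne_of_gt hx0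
  have hsin : Real.sin (π * x / 2) ≠ 0 := by
    refine ne_of_gt (Real.sin_pos_of_pos_of_lt_pi (by positivity) ?_)
    nlinarith
  -- the full sum over ℤ has value π^2 / (4 sin^2 (π x / 2))
  have hFval : HasSum (fun k : ℤ => 1 / (2 * (k : ℝ) + x) ^ 2)
      (π ^ 2 / Real.sin (π * x / 2) ^ 2 / 4) := by
    have hs := (summable_aux (x/2)).hasSum
    rw [tsum_one_div_sub_int_sq (by linarith) (by linarith)] at hs
    have hs4 := hs.div_const 4
    have hs5 := ((Equiv.neg ℤ).hasSum_iff).mpr hs4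
    have hfun : ((fun n : ℤ => 1 / (x/2 - (n : ℝ)) ^ 2 / 4) ∘ ⇑(Equiv.neg ℤ))
        = fun k : ℤ => 1 / (2 * (k : ℝ) + x) ^ 2 := by
      funext k
      simp only [Function.comp_apply, Equiv.neg_apply]
      rw [div_div]
      congr 1
      push_cast
      ring
    rw [hfun] at hs5
    rw [show π * x / 2 = π * (x/2) by ring]
    exact hs5
  -- split off the k = 0 term
  have hS : HasSum (fun k : {k : ℤ // k ≠ 0} => 1 / (2 * (k : ℝ) + x) ^ 2)
      (π ^ 2 / Real.sin (π * x / 2) ^ 2 / 4 - 1 / x ^ 2) := by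
    have h2 : HasSum (fun k : {k : ℤ // k ∉ ({0} : Finset ℤ)} => 1 / (2 * (k : ℝ) + x) ^ 2)
        (π ^ 2 / Real.sin (π * x / 2) ^ 2 / 4 - 1 / x ^ 2) := by
      refine (Finset.hasSum_compl_iff (f := fun k : ℤ => 1 / (2 * (k : ℝ) + x) ^ 2)
        ({0} : Finset ℤ)).2 ?_
      convert hFval using 1
      · rfl
      · simp
    exact ((Equiv.hasSum_iff
      (Equiv.subtypeEquivRight (q := fun k : ℤ => k ≠ 0) (fun k => by simp))).mp h2)
  refine ⟨hS.summable, ?_⟩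
  rw [hS.tsum_eq]
  -- derivative of cot (π t / 2)
  have hu : HasDerivAt (fun t : ℝ => π * t / 2) (π / 2) x := by
    simpa using ((hasDerivAt_id x).const_mul π).div_const 2
  have hcot : HasDerivAt Real.cot (-1 / Real.sin (π * x / 2) ^ 2) (π * x / 2) := by
    have h := (Real.hasDerivAt_cos (π*x/2)).div (Real.hasDerivAt_sin (π*x/2)) hsin
    have hnum : -Real.sin (π*x/2) * Real.sin (π*x/2) - Real.cos (π*x/2) * Real.cos (π*x/2)
        = -1 := by nlinarith [Real.sin_sq_add_cos_sq (π*x/2)]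
    rw [hnum] at h
    have hco : Real.cot = fun y => Real.cos y / Real.sin y :=
      funext fun y => Real.cot_eq_cos_div_sin y
    rw [hco]
    exact h
  have h1 : HasDerivAt (fun t : ℝ => Real.cot (π * t / 2))
      (-1 / Real.sin (π * x / 2) ^ 2 * (π / 2)) x := by
    have := hcot.comp x hu
    exact this
  have h2 : HasDerivAt (fun t : ℝ => 2 / (π * t)) (2 / π * -(x ^ 2)⁻¹) x := by
    have hi := (hasDerivAt_inv hx0').const_mul (2/π)
    have hfun : (fun t : ℝ => 2 / π * t⁻¹) = fun t : ℝ => 2 / (π * t) := by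
      funext t
      rw [← div_div]
      ring
    rw [hfun] at hi
    exact hi
  have hD := h1.sub h2
  refine HasDerivAt.congr_deriv hD ?_
  have hs2 : Real.sin (π * x / 2) ^ 2 ≠ 0 := pow_ne_zero 2 hsin
  field_simp
  ring
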